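/- Let L be a Lipschitz seminorm on a unital pre-C*-algebra A (L(a)=0 iff a ∈ ℂ1), and σ a state of A. Then the set {a ∈ A : L(a) ≤ 1} has totally bounded image in A/ℂ1 (with quotient norm) if and only if the set E = {a ∈ A : L(a) ≤ 1 and σ(a) = 0} is norm-totally-bounded in A. -/

import Mathlib

/-- Let `L` be a Lipschitz seminorm on a unital (pre-)C*-algebra `A` (a seminorm whose
null space is exactly `ℂ1`), and let `σ` be a state of `A`.  Then the image of
`{a : L(a) ≤ 1}` in the quotient `A/ℂ1` (with the quotient seminorm) is totally bounded
if and only if `E = {a : L(a) ≤ 1 and σ(a) = 0}` is norm-totally-bounded in `A`. -/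
theorem stmt_16 {A : Type*} [NormedRing A] [NormedAlgebra ℂ A] [StarRing A]
    (L : A → ℝ)
    (hL0 : ∀ a : A, 0 ≤ L a)
    (hLadd : ∀ a b : A, L (a + b) ≤ L a + L b)
    (hLsmul : ∀ (c : ℂ) (a : A), L (c • a) = ‖c‖ * L a)
    (hLnull : ∀ a : A, L a = 0 ↔ ∃ c : ℂ, a = c • (1 : A))
    (σ : A →ₗ[ℂ] ℂ)
    (hσ1 : σ 1 = 1)
    (hσbdd : ∀ a : A, ‖σ a‖ ≤ ‖a‖) :
    TotallyBounded ((Submodule.span ℂ ({1} : Set A)).mkQ '' {a : A | L a ≤ 1}) ↔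
    TotallyBounded {a : A | L a ≤ 1 ∧ σ a = 0} := by
  set S : Submodule ℂ A := Submodule.span ℂ ({1} : Set A) with hS
  have hone_mem : (1 : A) ∈ S := Submodule.mem_span_singleton_self 1
  have hL1 : L (1 : A) = 0 := (hLnull 1).2 ⟨1, by simp⟩
  -- key norm estimate: if σ a = 0 then ‖a‖ ≤ (1 + ‖1‖) * ‖a - c•1‖ for all c
  set K : ℝ := 1 + ‖(1 : A)‖ with hK
  have hK1 : (1 : ℝ) ≤ K := by
    have : (1 : ℝ) ≤ ‖(1 : A)‖ := by simpa [hσ1] using hσbdd 1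
    rw [hK]; linarith
  have hKpos : (0 : ℝ) < K := lt_of_lt_of_le one_pos hK1
  have key : ∀ a : A, σ a = 0 → ∀ c : ℂ, ‖a‖ ≤ K * ‖a - c • (1 : A)‖ := by
    intro a ha c
    have hc : ‖c‖ ≤ ‖a - c • (1 : A)‖ := by
      have := hσbdd (a - c • (1 : A))
      simpa [ha, hσ1] using this
    calc ‖a‖ = ‖(a - c • (1 : A)) + c • (1 : A)‖ := by rw [sub_add_cancel]
      _ ≤ ‖a - c • (1 : A)‖ + ‖c • (1 : A)‖ := norm_add_le _ _
      _ ≤ ‖a - c • (1 : A)‖ + ‖c‖ * ‖(1 : A)‖ := by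
          gcongr; exact norm_smul_le _ _
      _ ≤ ‖a - c • (1 : A)‖ + ‖a - c • (1 : A)‖ * ‖(1 : A)‖ := by
          gcongr
      _ = K * ‖a - c • (1 : A)‖ := by ring
  -- the subtracted element lies in E
  have hsub : ∀ a : A, L a ≤ 1 → (L (a - σ a • (1 : A)) ≤ 1 ∧ σ (a - σ a • (1 : A)) = 0) := by
    intro a ha
    constructor
    · have : L (a + (-(σ a)) • (1 : A)) ≤ L a + L ((-(σ a)) • (1 : A)) := hLadd _ _
      have h2 : L ((-(σ a)) • (1 : A)) = 0 := by rw [hLsmul, hL1]; ring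
      calc L (a - σ a • (1 : A)) = L (a + (-(σ a)) • (1 : A)) := by
            rw [neg_smul, ← sub_eq_add_neg]
        _ ≤ L a + 0 := by rw [← h2]; exact this
        _ ≤ 1 := by simpa using ha
    · simp [map_sub, map_smul, hσ1, smul_eq_mul]
  have hmk_eq : ∀ a : A, S.mkQ (a - σ a • (1 : A)) = S.mkQ a := by
    intro a
    rw [Submodule.mkQ_apply, Submodule.mkQ_apply, Submodule.Quotient.eq]
    simpa using Submodule.smul_mem S (-(σ a)) hone_mem
  constructor
  · -- image totally bounded → E totally bounded
    intro h
    rw [Metric.totallyBounded_iff]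
    intro ε hε
    set δ : ℝ := ε / (2 * K) with hδ
    have hδpos : 0 < δ := div_pos hε (by positivity)
    obtain ⟨t, hts, htfin, hcov⟩ := Metric.finite_approx_of_totallyBounded h δ hδpos
    -- choose representatives for each center
    have hrep : ∀ q ∈ t, ∃ a : A, L a ≤ 1 ∧ S.mkQ a = q := by
      intro q hq
      obtain ⟨a, ha, rfl⟩ := hts hq
      exact ⟨a, ha, rfl⟩
    choose rep hrepL hrepmk using hrep
    classical
    refine ⟨{y | ∃ q hq, rep q hq - σ (rep q hq) • (1 : A) = y},
      htfin.dependent_image _, ?_⟩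
    · intro x hx
      obtain ⟨hxL, hxσ⟩ := hx
      have hxQ : S.mkQ x ∈ S.mkQ '' {a : A | L a ≤ 1} := ⟨x, hxL, rfl⟩
      obtain ⟨q, hq, hxq⟩ := Set.mem_iUnion₂.1 (hcov hxQ)
      simp only [Metric.mem_ball] at hxq
      set e : A := rep q hq - σ (rep q hq) • (1 : A) with he
      have heE : L e ≤ 1 ∧ σ e = 0 := hsub _ (hrepL q hq)
      -- quotient norm estimate
      have hmkdiff : ‖S.mkQ (x - e)‖ < δ := by
        have : S.mkQ (x - e) = S.mkQ x - q := by
          rw [map_sub, he, hmk_eq, hrepmk]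
        rw [this]
        simpa [dist_eq_norm] using hxq
      -- get a good representative of x - e
      obtain ⟨m, hm, hmlt⟩ := Submodule.Quotient.norm_mk_lt (S.mkQ (x - e)) hδpos
      have hmnorm : ‖m‖ < 2 * δ := lt_of_lt_of_le hmlt (by linarith)
      have hmem : m - (x - e) ∈ S := by
        rw [← Submodule.Quotient.eq]
        exact hm
      obtain ⟨c, hc⟩ := Submodule.mem_span_singleton.1 hmem
      have hxe : x - e - (-c) • (1 : A) = m := by
        rw [neg_smul, sub_neg_eq_add, hc]; abel
      have hσxe : σ (x - e) = 0 := by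
        rw [map_sub, hxσ, heE.2]; ring
      have : ‖x - e‖ ≤ K * ‖m‖ := by
        have := key (x - e) hσxe (-c)
        rwa [hxe] at this
      have hlt : ‖x - e‖ < ε := by
        calc ‖x - e‖ ≤ K * ‖m‖ := this
          _ < K * (2 * δ) := by
              have : 0 ≤ ‖x - e‖ := norm_nonneg _
              exact (mul_lt_mul_iff_right₀ hKpos).2 hmnorm
          _ = ε := by rw [hδ]; field_simp
      refine Set.mem_iUnion₂.2 ⟨e, ⟨q, hq, rfl⟩, ?_⟩
      simpa [Metric.mem_ball, dist_eq_norm] using hlt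
  · -- E totally bounded → image totally bounded
    intro h
    have humc : UniformContinuous S.mkQ := by
      refine LipschitzWith.uniformContinuous (K := 1) ?_
      apply LipschitzWith.of_dist_le_mul
      intro x y
      rw [dist_eq_norm, dist_eq_norm, ← map_sub]
      simpa using Submodule.Quotient.norm_mk_le S (x - y)
    have himg : S.mkQ '' {a : A | L a ≤ 1} = S.mkQ '' {a : A | L a ≤ 1 ∧ σ a = 0} := by
      apply Set.Subset.antisymm
      · rintro _ ⟨a, ha, rfl⟩
        exact ⟨a - σ a • (1 : A), hsub a ha, hmk_eq a⟩
      · exact Set.image_mono (fun a ha => ha.1)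
    rw [himg]
    exact h.image humc
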